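/- Let n = 3, let X : Fin 3 → Fin 1 → ℝ be the column matrix with rows (2), (5), (1), and let X' : Fin 3 → Fin 2 → ℝ be the matrix with rows (2,50), (5,20), (1,10). Then for every finite real p ∈ [1,∞), the nearest-neighbor sets of X and X' are disjoint in every row: NEAR(p,X,i) ∩ NEAR(p,X',i) = ∅ for each i : Fin 3, and consequently ROB⁺(p,X,X') = 0. -/

import Mathlib

open scoped ENNReal NNReal

/-- The `ℓ^p` distance matrix of `X : Fin n → Fin k → ℝ`: the `(i,j)` entry is the
`ℓ^p` distance between rows `X i` and `X j`. -/
noncomputable def distMat {n k : ℕ} (p : ℝ≥0∞) (X : Fin n → Fin k → ℝ) :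
    Matrix (Fin n) (Fin n) ℝ :=
  fun i j =>
    if p = ⊤ then ((Finset.univ.sup fun t => Real.nnabs (X j t - X i t)) : ℝ≥0)
    else (∑ t, |X j t - X i t| ^ p.toReal) ^ (1 / p.toReal)

/-- The set of `p`-nearest neighbors of row `i` of `X`. -/
def nearSet {n k : ℕ} (p : ℝ≥0∞) (X : Fin n → Fin k → ℝ) (i : Fin n) : Set (Fin n) :=
  {j | j ≠ i ∧ ∀ j' : Fin n, j' ≠ i → distMat p X i j ≤ distMat p X i j'}

/-- `NEAR(p,X)`: the total number of nearest-neighbor pairs. -/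
noncomputable def NEARcount {n k : ℕ} (p : ℝ≥0∞) (X : Fin n → Fin k → ℝ) : ℕ :=
  ∑ i, (nearSet p X i).ncard

/-- `ROB⁺(p,X,X')`: the proportion of nearest neighbors preserved in passing
from `X` to the one-column extension `X'`. -/
noncomputable def robPlus {n k : ℕ} (p : ℝ≥0∞) (X : Fin n → Fin k → ℝ)
    (X' : Fin n → Fin (k + 1) → ℝ) : ℝ :=
  (∑ i, ((nearSet p X i ∩ nearSet p X' i).ncard : ℝ)) / (NEARcount p X : ℝ)

lemma myaux_superadd {a b r : ℝ} (ha : 0 ≤ a) (hb : 0 ≤ b) (hr : 1 ≤ r) :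
    a ^ r + b ^ r ≤ (a + b) ^ r := by
  have h := NNReal.add_rpow_le_rpow_add ⟨a, ha⟩ ⟨b, hb⟩ hr
  have := NNReal.coe_le_coe.2 h
  exact_mod_cast this

/-- Ex6: for every finite `p ∈ [1,∞)`, the nearest-neighbor sets of `X` and its
extension `X'` are disjoint in every row, so `ROB⁺(p,X,X') = 0`. -/
theorem stmt_9 (p : ℝ≥0∞) (hp : 1 ≤ p) (hptop : p ≠ ⊤) :
    (∀ i : Fin 3,
        nearSet p (![![2], ![5], ![1]] : Fin 3 → Fin 1 → ℝ) i ∩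
          nearSet p (![![2, 50], ![5, 20], ![1, 10]] : Fin 3 → Fin 2 → ℝ) i = ∅) ∧
    robPlus p (![![2], ![5], ![1]] : Fin 3 → Fin 1 → ℝ)
        (![![2, 50], ![5, 20], ![1, 10]] : Fin 3 → Fin 2 → ℝ) = 0 := by
  set X : Fin 3 → Fin 1 → ℝ := ![![2], ![5], ![1]] with hXdef
  set X' : Fin 3 → Fin 2 → ℝ := ![![2, 50], ![5, 20], ![1, 10]] with hX'def
  have hr1 : 1 ≤ p.toReal := by
    have := ENNReal.toReal_mono hptop hp
    simpa using this
  have hr0 : 0 < p.toReal := lt_of_lt_of_le one_pos hr1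
  set r := p.toReal with hrdef
  have key : ∀ (a b : ℝ), 0 ≤ a → a < b → a ^ (1/r) < b ^ (1/r) := fun a b ha h =>
    Real.rpow_lt_rpow ha h (by positivity)
  have mono : ∀ (a b : ℝ), 0 ≤ a → a ≤ b → a ^ r ≤ b ^ r := fun a b ha h =>
    Real.rpow_le_rpow ha h hr0.le
  have strict : ∀ (a b : ℝ), 0 ≤ a → a < b → a ^ r < b ^ r := fun a b ha h =>
    Real.rpow_lt_rpow ha h hr0
  -- distance matrix entries
  have e01 : distMat p X 0 1 = ((3:ℝ) ^ r) ^ (1/r) := by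
    simp [distMat, hptop, Fin.sum_univ_succ, hXdef]; norm_num; rfl
  have e02 : distMat p X 0 2 = ((1:ℝ) ^ r) ^ (1/r) := by
    simp [distMat, hptop, Fin.sum_univ_succ, hXdef]; norm_num
  have e10 : distMat p X 1 0 = ((3:ℝ) ^ r) ^ (1/r) := by
    simp [distMat, hptop, Fin.sum_univ_succ, hXdef]; norm_num; rfl
  have e12 : distMat p X 1 2 = ((4:ℝ) ^ r) ^ (1/r) := by
    simp [distMat, hptop, Fin.sum_univ_succ, hXdef]; norm_num; rfl
  have e20 : distMat p X 2 0 = ((1:ℝ) ^ r) ^ (1/r) := by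
    simp [distMat, hptop, Fin.sum_univ_succ, hXdef]; norm_num
  have e21 : distMat p X 2 1 = ((4:ℝ) ^ r) ^ (1/r) := by
    simp [distMat, hptop, Fin.sum_univ_succ, hXdef]; norm_num; rfl
  have f01 : distMat p X' 0 1 = ((3:ℝ) ^ r + 30 ^ r) ^ (1/r) := by
    simp [distMat, hptop, Fin.sum_univ_succ, hX'def]; norm_num; rfl
  have f02 : distMat p X' 0 2 = ((1:ℝ) ^ r + 40 ^ r) ^ (1/r) := by
    simp [distMat, hptop, Fin.sum_univ_succ, hX'def]; norm_num; rfl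
  have f10 : distMat p X' 1 0 = ((3:ℝ) ^ r + 30 ^ r) ^ (1/r) := by
    simp [distMat, hptop, Fin.sum_univ_succ, hX'def]; norm_num; rfl
  have f12 : distMat p X' 1 2 = ((4:ℝ) ^ r + 10 ^ r) ^ (1/r) := by
    simp [distMat, hptop, Fin.sum_univ_succ, hX'def]; norm_num; rfl
  have f20 : distMat p X' 2 0 = ((1:ℝ) ^ r + 40 ^ r) ^ (1/r) := by
    simp [distMat, hptop, Fin.sum_univ_succ, hX'def]; norm_num; rfl
  have f21 : distMat p X' 2 1 = ((4:ℝ) ^ r + 10 ^ r) ^ (1/r) := by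
    simp [distMat, hptop, Fin.sum_univ_succ, hX'def]; norm_num; rfl
  -- basic rpow facts
  have one_r : (1:ℝ) ^ r = 1 := Real.one_rpow r
  have pos3 : (0:ℝ) < 3 ^ r := Real.rpow_pos_of_pos (by norm_num) r
  have sup3010 : (30:ℝ) ^ r + 10 ^ r ≤ 40 ^ r := by
    have := myaux_superadd (a := 30) (b := 10) (by norm_num) (by norm_num) hr1
    norm_num at this; linarith
  have sup410 : (4:ℝ) ^ r + 10 ^ r ≤ 14 ^ r := by
    have := myaux_superadd (a := 4) (b := 10) (by norm_num) (by norm_num) hr1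
    norm_num at this; linarith
  -- strict sum inequalities
  have A0 : (1:ℝ) ^ r < 3 ^ r := strict 1 3 (by norm_num) (by norm_num)
  have A1 : (3:ℝ) ^ r < 4 ^ r := strict 3 4 (by norm_num) (by norm_num)
  have A2 : (1:ℝ) ^ r < 4 ^ r := strict 1 4 (by norm_num) (by norm_num)
  have B0 : (3:ℝ) ^ r + 30 ^ r < 1 ^ r + 40 ^ r := by
    have h310 : (3:ℝ) ^ r ≤ 10 ^ r := mono 3 10 (by norm_num) (by norm_num)
    rw [one_r]; linarith [Real.rpow_pos_of_pos (show (0:ℝ) < 1 by norm_num) r]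
  have B1 : (4:ℝ) ^ r + 10 ^ r < 3 ^ r + 30 ^ r := by
    have h1430 : (14:ℝ) ^ r ≤ 30 ^ r := mono 14 30 (by norm_num) (by norm_num)
    linarith
  have B2 : (4:ℝ) ^ r + 10 ^ r < 1 ^ r + 40 ^ r := by
    have h1440 : (14:ℝ) ^ r ≤ 40 ^ r := mono 14 40 (by norm_num) (by norm_num)
    rw [one_r]; linarith
  -- strict distance inequalities
  have dX0 : distMat p X 0 2 < distMat p X 0 1 := by
    rw [e02, e01]; exact key _ _ (by positivity) A0
  have dX1 : distMat p X 1 0 < distMat p X 1 2 := by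
    rw [e10, e12]; exact key _ _ (by positivity) A1
  have dX2 : distMat p X 2 0 < distMat p X 2 1 := by
    rw [e20, e21]; exact key _ _ (by positivity) A2
  have dX'0 : distMat p X' 0 1 < distMat p X' 0 2 := by
    rw [f01, f02]; exact key _ _ (by positivity) B0
  have dX'1 : distMat p X' 1 2 < distMat p X' 1 0 := by
    rw [f12, f10]; exact key _ _ (by positivity) B1
  have dX'2 : distMat p X' 2 1 < distMat p X' 2 0 := by
    rw [f21, f20]; exact key _ _ (by positivity) B2
  have part1 : ∀ i : Fin 3, nearSet p X i ∩ nearSet p X' i = ∅ := by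
    intro i
    rw [Set.eq_empty_iff_forall_notMem]
    rintro j ⟨⟨hj1, hA⟩, hj2, hB⟩
    have hi : i = 0 ∨ i = 1 ∨ i = 2 := by omega
    have hj : j = 0 ∨ j = 1 ∨ j = 2 := by omega
    rcases hi with rfl | rfl | rfl
    · rcases hj with rfl | rfl | rfl
      · exact hj1 rfl
      · have h := hA 2 (by decide)
        linarith
      · have h := hB 1 (by decide)
        linarith
    · rcases hj with rfl | rfl | rfl
      · have h := hB 2 (by decide)
        linarith
      · exact hj1 rfl
      · have h := hA 0 (by decide)
        linarith
    · rcases hj with rfl | rfl | rfl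
      · have h := hB 1 (by decide)
        linarith
      · have h := hA 0 (by decide)
        linarith
      · exact hj1 rfl
  refine ⟨part1, ?_⟩
  unfold robPlus
  rw [Finset.sum_eq_zero, zero_div]
  intro i _
  rw [part1 i]
  simp
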